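/- Let Ω ⊆ ℝ^N be open, y : Ω → ℝ^N a map, and x₀ ∈ Ω a point of the geometric domain of y in the following sense: there exist a compact set K ⊆ Ω with x₀ ∈ K and with Lebesgue density 1 at x₀, and a continuously differentiable map w : ℝ^N → ℝ^N with w = y on K and det(Dw(x₀)) ≠ 0, where Dw(x₀) is the Fréchet derivative of w at x₀. Then for every measurable set E ⊆ Ω with Lebesgue density 1 at x₀, the image y(E ∩ K) has Lebesgue density 1 at y(x₀): volume(y(E ∩ K) ∩ B̄(y(x₀), r)) / volume(B̄(y(x₀), r)) → 1 as r → 0⁺. In particular the geometric image im_G(y, E), which contains y(E ∩ K), has density 1 at y(x₀). -/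

import Mathlib

open MeasureTheory Filter Topology Set
open scoped ENNReal

noncomputable section

abbrev Euc (N : ℕ) := EuclideanSpace ℝ (Fin N)

/-- `S` has Lebesgue density `1` at `p`. -/
def DensityOne {N : ℕ} (S : Set (Euc N)) (p : Euc N) : Prop :=
  Tendsto (fun r : ℝ => volume (S ∩ Metric.closedBall p r) / volume (Metric.closedBall p r))
    (𝓝[>] 0) (𝓝 1)

lemma volCB_ne_zero {N : ℕ} (p : Euc N) {r : ℝ} (hr : 0 < r) :
    volume (Metric.closedBall p r) ≠ 0 := (Metric.measure_closedBall_pos _ p hr).ne'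

lemma volCB_ne_top {N : ℕ} (p : Euc N) (r : ℝ) :
    volume (Metric.closedBall p r) ≠ ⊤ := measure_closedBall_lt_top.ne

/-- If the relative measure of the complement tends to `0`, the set has density one.
No measurability needed. -/
lemma densityOne_of_compl {N : ℕ} {A : Set (Euc N)} {p : Euc N}
    (h : Tendsto (fun r : ℝ =>
        volume (Metric.closedBall p r \ A) / volume (Metric.closedBall p r)) (𝓝[>] 0) (𝓝 0)) :
    DensityOne A p := by
  have h1 : Tendsto (fun r : ℝ =>
      1 - volume (Metric.closedBall p r \ A) / volume (Metric.closedBall p r)) (𝓝[>] 0) (𝓝 1) := by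
    have := ENNReal.Tendsto.sub (tendsto_const_nhds : Tendsto (fun _ : ℝ => (1 : ℝ≥0∞)) (𝓝[>] (0:ℝ)) (𝓝 1)) h
      (Or.inl ENNReal.one_ne_top)
    simpa using this
  refine tendsto_of_tendsto_of_tendsto_of_le_of_le' h1 tendsto_const_nhds ?_ ?_
  · filter_upwards [self_mem_nhdsWithin] with r hr
    set B := Metric.closedBall p r
    have hv0 : volume B ≠ 0 := volCB_ne_zero p hr
    have hvt : volume B ≠ ⊤ := volCB_ne_top p r
    rw [tsub_le_iff_right]
    calc (1 : ℝ≥0∞) = volume B / volume B := (ENNReal.div_self hv0 hvt).symm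
      _ ≤ (volume (A ∩ B) + volume (B \ A)) / volume B := by
          apply ENNReal.div_le_div_right
          calc volume B ≤ volume (B ∩ A) + volume (B \ A) := measure_le_inter_add_diff _ B A
            _ = volume (A ∩ B) + volume (B \ A) := by rw [inter_comm]
      _ = volume (A ∩ B) / volume B + volume (B \ A) / volume B := ENNReal.add_div
  · filter_upwards [self_mem_nhdsWithin] with r hr
    set B := Metric.closedBall p r
    calc volume (A ∩ B) / volume B ≤ volume B / volume B :=
          ENNReal.div_le_div_right (measure_mono inter_subset_right) _
      _ ≤ 1 := by rw [ENNReal.div_self (volCB_ne_zero p hr) (volCB_ne_top p r)]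

/-- For a measurable set of density one, the relative measure of the complement tends to `0`. -/
lemma compl_of_densityOne {N : ℕ} {S : Set (Euc N)} {p : Euc N}
    (hm : MeasurableSet S) (h : DensityOne S p) :
    Tendsto (fun r : ℝ =>
        volume (Metric.closedBall p r \ S) / volume (Metric.closedBall p r)) (𝓝[>] 0) (𝓝 0) := by
  have h1 : Tendsto (fun r : ℝ =>
      1 - volume (S ∩ Metric.closedBall p r) / volume (Metric.closedBall p r)) (𝓝[>] 0) (𝓝 0) := by
    have := ENNReal.Tendsto.sub (tendsto_const_nhds : Tendsto (fun _ : ℝ => (1 : ℝ≥0∞)) (𝓝[>] (0:ℝ)) (𝓝 1)) h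
      (Or.inl ENNReal.one_ne_top)
    simpa using this
  refine Tendsto.congr' ?_ h1
  filter_upwards [self_mem_nhdsWithin] with r hr
  set B := Metric.closedBall p r
  have hv0 : volume B ≠ 0 := volCB_ne_zero p hr
  have hvt : volume B ≠ ⊤ := volCB_ne_top p r
  have hfin : volume (S ∩ B) / volume B ≠ ⊤ :=
    (ENNReal.div_lt_top ((measure_mono inter_subset_right).trans_lt hvt.lt_top).ne hv0).ne
  have key : volume (B \ S) / volume B + volume (S ∩ B) / volume B = 1 := by
    rw [← ENNReal.add_div, inter_comm, add_comm (volume (B \ S)) (volume (B ∩ S)),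
      measure_inter_add_diff B hm, ENNReal.div_self hv0 hvt]
  exact (ENNReal.eq_sub_of_add_eq hfin key).symm

/-- Density of the geometric image at images of points of the geometric domain:
if `x₀` belongs to the geometric domain of `y` (witnessed by a compact set `K` of
density `1` at `x₀` and a `C¹` map `w` agreeing with `y` on `K`, with nonvanishing
Jacobian at `x₀`), then for every measurable `E ⊆ Ω` of density `1` at `x₀`, the
image `y(E ∩ K)` has density `1` at `y(x₀)`. -/
theorem density_of_geometric_image {N : ℕ} (hN : 2 ≤ N)
    (Ω : Set (Euc N)) (hΩ : IsOpen Ω)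
    (y : Euc N → Euc N) (x₀ : Euc N) (hx₀ : x₀ ∈ Ω)
    (K : Set (Euc N)) (hK : IsCompact K) (hKΩ : K ⊆ Ω) (hx₀K : x₀ ∈ K)
    (hKdens : DensityOne K x₀)
    (w : Euc N → Euc N) (hw : ContDiff ℝ 1 w) (hwy : Set.EqOn w y K)
    (hdet : (fderiv ℝ w x₀).det ≠ 0) :
    ∀ E : Set (Euc N), MeasurableSet E → E ⊆ Ω → DensityOne E x₀ →
      DensityOne (y '' (E ∩ K)) (y x₀) := by
  intro E hEm hEΩ hEdens
  classical
  set S : Set (Euc N) := E ∩ K with hSdef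
  have hSm : MeasurableSet S := hEm.inter hK.measurableSet
  -- relative measure of the complement of `S` tends to `0`
  have hdS : Tendsto (fun r : ℝ =>
      volume (Metric.closedBall x₀ r \ S) / volume (Metric.closedBall x₀ r)) (𝓝[>] 0) (𝓝 0) := by
    have hdE := compl_of_densityOne hEm hEdens
    have hdK := compl_of_densityOne hK.measurableSet hKdens
    have hsum := hdE.add hdK
    rw [add_zero] at hsum
    refine tendsto_of_tendsto_of_tendsto_of_le_of_le' tendsto_const_nhds hsum
      (.of_forall fun r => zero_le) ?_
    filter_upwards with r
    set B := Metric.closedBall x₀ r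
    calc volume (B \ S) / volume B ≤ (volume (B \ E) + volume (B \ K)) / volume B := by
          apply ENNReal.div_le_div_right
          rw [hSdef, diff_inter]
          exact measure_union_le _ _
      _ = _ := ENNReal.add_div
  -- derivative setup
  set A : Euc N →L[ℝ] Euc N := fderiv ℝ w x₀ with hAdef
  have hA : HasStrictFDerivAt w A x₀ := hw.contDiffAt.hasStrictFDerivAt one_ne_zero
  have hdet' : LinearMap.det (A : Euc N →ₗ[ℝ] Euc N) ≠ 0 := hdet
  set A' : Euc N ≃L[ℝ] Euc N :=
    (LinearMap.equivOfDetNeZero (A : Euc N →ₗ[ℝ] Euc N) hdet').toContinuousLinearEquiv with hA'def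
  have hcoe : (A' : Euc N →L[ℝ] Euc N) = A := by ext x; rfl
  have hA' : HasStrictFDerivAt w (A' : Euc N →L[ℝ] Euc N) x₀ := by rw [hcoe]; exact hA
  set y₀ := w x₀ with hy₀def
  -- measure-image bound
  set m : ℝ≥0∞ := ENNReal.ofReal |A.det| + 1 with hmdef
  have hm_netop : m ≠ ⊤ := by
    rw [hmdef]; exact ENNReal.add_ne_top.mpr ⟨ENNReal.ofReal_ne_top, ENNReal.one_ne_top⟩
  have hmlt : ENNReal.ofReal |A.det| < m :=
    ENNReal.lt_add_right ENNReal.ofReal_ne_top one_ne_zero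
  obtain ⟨δ, hδP, hδpos⟩ :=
    ((addHaar_image_le_mul_of_det_lt volume A hmlt).and self_mem_nhdsWithin).exists
  obtain ⟨s, hs_nhds, hsA⟩ := hA.approximates_deriv_on_nhds (Or.inr hδpos)
  have himg : ∀ T : Set (Euc N), T ⊆ s → volume (w '' T) ≤ m * volume T :=
    fun T hT => hδP T w (hsA.mono_set hT)
  -- local inverse
  set g := hA'.localInverse w A' x₀ with hgdef
  have hgy₀ : g y₀ = x₀ := hA'.localInverse_apply_image
  have hg_strict : HasStrictFDerivAt g (A'.symm : Euc N →L[ℝ] Euc N) y₀ := hA'.to_localInverse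
  obtain ⟨L, t, ht_nhds, hLip⟩ := hg_strict.exists_lipschitzOnWith
  have hri : ∀ᶠ z in 𝓝 y₀, w (g z) = z := hA'.eventually_right_inverse
  have hgs : ∀ᶠ z in 𝓝 y₀, g z ∈ s := by
    have hc : ContinuousAt g y₀ := hA'.localInverse_continuousAt
    exact hc.eventually_mem (by rwa [hgy₀])
  have ht_ev : ∀ᶠ z in 𝓝 y₀, z ∈ t := eventually_of_mem ht_nhds fun z hz => hz
  have hall : ∀ᶠ z in 𝓝 y₀, z ∈ t ∧ w (g z) = z ∧ g z ∈ s := ht_ev.and (hri.and hgs)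
  obtain ⟨ε, hεpos, hεsub⟩ := Metric.nhds_basis_closedBall.eventually_iff.mp hall
  set L' : ℝ := max (L : ℝ) 1 with hL'def
  have hL'pos : (0 : ℝ) < L' := lt_of_lt_of_le one_pos (le_max_right _ _)
  have hty₀ : y₀ ∈ t := mem_of_mem_nhds ht_nhds
  -- covering
  have hcover : ∀ r : ℝ, 0 < r → r ≤ ε →
      Metric.closedBall y₀ r \ (w '' S) ⊆
        w '' ((s ∩ Metric.closedBall x₀ (L' * r)) \ S) := by
    intro r hrpos hrε z hz
    obtain ⟨hz1, hz2⟩ := hz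
    have hzV : z ∈ Metric.closedBall y₀ ε := Metric.closedBall_subset_closedBall hrε hz1
    obtain ⟨hzt, hzw, hzs⟩ := hεsub hzV
    refine ⟨g z, ⟨⟨hzs, ?_⟩, ?_⟩, hzw⟩
    · have hd : dist (g z) (g y₀) ≤ (L : ℝ) * dist z y₀ := hLip.dist_le_mul z hzt y₀ hty₀
      rw [hgy₀] at hd
      refine Metric.mem_closedBall.mpr (hd.trans ?_)
      exact mul_le_mul (le_max_left _ _) (Metric.mem_closedBall.mp hz1) dist_nonneg hL'pos.le
    · intro hgzS
      exact hz2 ⟨g z, hgzS, hzw⟩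
  -- constants
  set c1 : ℝ≥0∞ := ENNReal.ofReal (L' ^ Module.finrank ℝ (Euc N)) with hc1def
  have hc1_ne0 : c1 ≠ 0 := by
    rw [hc1def, Ne, ENNReal.ofReal_eq_zero, not_le]
    positivity
  have hc1_netop : c1 ≠ ⊤ := ENNReal.ofReal_ne_top
  set C : ℝ≥0∞ := m * c1 with hCdef
  have hC_netop : C ≠ ⊤ := ENNReal.mul_ne_top hm_netop hc1_netop
  -- key ratio bound
  have hkey : ∀ r : ℝ, 0 < r → r ≤ ε →
      volume (Metric.closedBall y₀ r \ (w '' S)) / volume (Metric.closedBall y₀ r)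
        ≤ C * (volume (Metric.closedBall x₀ (L' * r) \ S) /
            volume (Metric.closedBall x₀ (L' * r))) := by
    intro r hrpos hrε
    set B := Metric.closedBall y₀ r with hBdef
    set B' := Metric.closedBall x₀ (L' * r) with hB'def
    have hv0 : volume B ≠ 0 := volCB_ne_zero y₀ hrpos
    have hvt : volume B ≠ ⊤ := volCB_ne_top y₀ r
    have hVv : volume B' = c1 * volume B := by
      rw [hBdef, hB'def, Measure.addHaar_closedBall volume x₀ (by positivity : (0:ℝ) ≤ L' * r),
        Measure.addHaar_closedBall volume y₀ hrpos.le, mul_pow,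
        ENNReal.ofReal_mul (by positivity : (0:ℝ) ≤ L' ^ Module.finrank ℝ (Euc N)), hc1def,
        mul_assoc]
    have h1 : volume (B \ (w '' S)) ≤ m * volume (B' \ S) := by
      calc volume (B \ (w '' S)) ≤ volume (w '' ((s ∩ B') \ S)) :=
            measure_mono (hcover r hrpos hrε)
        _ ≤ m * volume ((s ∩ B') \ S) := himg _ fun x hx => hx.1.1
        _ ≤ m * volume (B' \ S) :=
            mul_le_mul_right (measure_mono (diff_subset_diff_left inter_subset_right)) m
    calc volume (B \ (w '' S)) / volume B ≤ (m * volume (B' \ S)) / volume B :=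
          ENNReal.div_le_div_right h1 _
      _ = C * (volume (B' \ S) / volume B') := by
          rw [hVv, hCdef]
          simp only [div_eq_mul_inv, ENNReal.mul_inv (Or.inl hc1_ne0) (Or.inl hc1_netop)]
          rw [show m * c1 * (volume (B' \ S) * (c1⁻¹ * (volume B)⁻¹))
              = m * (c1 * c1⁻¹) * (volume (B' \ S) * (volume B)⁻¹) by ring,
            ENNReal.mul_inv_cancel hc1_ne0 hc1_netop, mul_one, mul_assoc]
  -- limit of the majorant
  have hmulmap : Tendsto (fun r : ℝ => L' * r) (𝓝[>] 0) (𝓝[>] 0) := by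
    rw [tendsto_nhdsWithin_iff]
    constructor
    · have h0 : Tendsto (fun r : ℝ => L' * r) (𝓝 0) (𝓝 (L' * 0)) :=
        tendsto_const_nhds.mul tendsto_id
      simpa using h0.mono_left nhdsWithin_le_nhds
    · filter_upwards [self_mem_nhdsWithin] with r hr
      exact mul_pos hL'pos hr
  have hd2 : Tendsto (fun r : ℝ => C * (volume (Metric.closedBall x₀ (L' * r) \ S) /
      volume (Metric.closedBall x₀ (L' * r)))) (𝓝[>] 0) (𝓝 0) := by
    have := ENNReal.Tendsto.const_mul (a := C) (hdS.comp hmulmap) (Or.inr hC_netop)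
    simpa [Function.comp] using this
  have hcompl : Tendsto (fun r : ℝ =>
      volume (Metric.closedBall y₀ r \ (w '' S)) / volume (Metric.closedBall y₀ r))
      (𝓝[>] 0) (𝓝 0) := by
    refine tendsto_of_tendsto_of_tendsto_of_le_of_le' tendsto_const_nhds hd2
      (.of_forall fun r => zero_le) ?_
    filter_upwards [Ioc_mem_nhdsGT_of_mem ⟨le_rfl, hεpos⟩] with r hr
    exact hkey r hr.1 hr.2
  -- conclusion
  have himg_eq : y '' (E ∩ K) = w '' S := by
    rw [hSdef]
    exact image_congr fun x hx => (hwy hx.2).symm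
  have hyx₀ : y x₀ = y₀ := (hwy hx₀K).symm
  rw [himg_eq, hyx₀]
  exact densityOne_of_compl hcompl
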